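/- If A ⊆ 𝔽₂ⁿ, ε ∈ (0,1], and V ≤ 𝔽₂ⁿ is constructed as V = W + ⟨x₁,…,x_d⟩ where (i) for all nonempty I ⊆ [d], A is ε-uniform on (∑_{i∈I}x_i) + W, and (ii) the densities 𝔼_{∑_{i∈I}x_i + W}1_A for nonempty I all lie in a common interval [j/r₀,(j+1)/r₀), then sup_{r ∉ V^⊥}|(1_A μ_V)^∧(r)| ≤ 2^{-d} + ε + 1/r₀. In particular, choosing 2^d, r₀ ≥ 1/ε gives sup_{r ∉ V^⊥}|(1_A μ_V)^∧(r)| ≤ 3ε. -/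

import Mathlib

open scoped Classical
open Finset
noncomputable section

/-- Dot product on `𝔽₂ⁿ`. -/
def dot2 {n : ℕ} (r x : Fin n → ZMod 2) : ZMod 2 := ∑ i, r i * x i

/-- The additive character `t ↦ (-1)^t` of `𝔽₂`. -/
def chi2 (t : ZMod 2) : ℂ := (-1 : ℂ) ^ t.val

/-- `(1_A μ_{x+W})^∧(r) = |W|⁻¹ ∑_{w ∈ W} 1_A(x+w) (-1)^{r·(x+w)}`. -/
def fcoset2 {n : ℕ} (A : Set (Fin n → ZMod 2)) (x : Fin n → ZMod 2)
    (W : Submodule (ZMod 2) (Fin n → ZMod 2)) (r : Fin n → ZMod 2) : ℂ :=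
  (∑ w : W, if x + (w : Fin n → ZMod 2) ∈ A then
      chi2 (dot2 r (x + (w : Fin n → ZMod 2))) else 0) / (Fintype.card W)

/-- The density `𝔼_{x+W} 1_A` of `A` on the coset `x + W`. -/
def dens2 {n : ℕ} (A : Set (Fin n → ZMod 2)) (x : Fin n → ZMod 2)
    (W : Submodule (ZMod 2) (Fin n → ZMod 2)) : ℝ :=
  (∑ w : W, if x + (w : Fin n → ZMod 2) ∈ A then (1 : ℝ) else 0) / (Fintype.card W)

lemma zmod2_cases (a : ZMod 2) : a = 0 ∨ a = 1 := by revert a; decide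

lemma zmod2_val_of_ne (a : ZMod 2) (h : a ≠ 0) : a.val = 1 := by revert a; decide

lemma abs_chi2 (t : ZMod 2) : ‖chi2 t‖ = 1 := by
  rcases zmod2_cases t with h | h <;> simp [h, chi2]

/-- `dot2 r` as a linear map in the second argument. -/
def dotL {n : ℕ} (r : Fin n → ZMod 2) : (Fin n → ZMod 2) →ₗ[ZMod 2] ZMod 2 where
  toFun y := dot2 r y
  map_add' a b := by simp [dot2, mul_add, Finset.sum_add_distrib]
  map_smul' c a := by simp [dot2, Finset.mul_sum, mul_left_comm, smul_eq_mul]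

lemma chiR_add (a b : ZMod 2) : ((-1 : ℝ)) ^ (a + b).val = (-1 : ℝ) ^ a.val * (-1) ^ b.val := by
  rcases zmod2_cases a with h | h <;> rcases zmod2_cases b with h' | h' <;>
    simp [h, h', show ((1:ZMod 2)+1) = 0 from by decide,
      show (1:ZMod 2).val = 1 from rfl]

lemma chiR_sum {d : ℕ} (f : Fin d → ZMod 2) (I : Finset (Fin d)) :
    ((-1 : ℝ)) ^ (∑ i ∈ I, f i).val = ∏ i ∈ I, (-1 : ℝ) ^ (f i).val := by
  induction I using Finset.cons_induction with
  | empty => simp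
  | cons a s ha ih => rw [Finset.sum_cons, Finset.prod_cons, chiR_add, ih]

lemma dens2_nonneg {n : ℕ} (A : Set (Fin n → ZMod 2)) (x : Fin n → ZMod 2)
    (W : Submodule (ZMod 2) (Fin n → ZMod 2)) : 0 ≤ dens2 A x W := by
  apply div_nonneg _ (by positivity)
  exact Finset.sum_nonneg fun w _ => by positivity

lemma dens2_le_one {n : ℕ} (A : Set (Fin n → ZMod 2)) (x : Fin n → ZMod 2)
    (W : Submodule (ZMod 2) (Fin n → ZMod 2)) : dens2 A x W ≤ 1 := by
  rw [dens2, div_le_one (by positivity)]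
  calc (∑ w : W, if x + (w : Fin n → ZMod 2) ∈ A then (1:ℝ) else 0)
      ≤ ∑ w : W, 1 := Finset.sum_le_sum fun w _ => by split <;> norm_num
    _ = Fintype.card W := by simp

lemma abs_fcoset2_le_one {n : ℕ} (A : Set (Fin n → ZMod 2)) (x : Fin n → ZMod 2)
    (W : Submodule (ZMod 2) (Fin n → ZMod 2)) (r : Fin n → ZMod 2) :
    ‖fcoset2 A x W r‖ ≤ 1 := by
  rw [fcoset2, norm_div]
  rw [div_le_one (by rw [Complex.norm_natCast]; positivity)]
  calc ‖(∑ w : W, if x + (w : Fin n → ZMod 2) ∈ A then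
        chi2 (dot2 r (x + (w : Fin n → ZMod 2))) else 0)‖
      ≤ ∑ w : W, ‖(if x + (w : Fin n → ZMod 2) ∈ A then
        chi2 (dot2 r (x + (w : Fin n → ZMod 2))) else 0)‖ := norm_sum_le _ _
    _ ≤ ∑ w : W, 1 := Finset.sum_le_sum fun w _ => by
        split
        · rw [abs_chi2]
        · simp
    _ = ‖((Fintype.card W : ℕ) : ℂ)‖ := by simp [Complex.norm_natCast]

lemma S_eq {n d : ℕ} (x : Fin d → (Fin n → ZMod 2)) (I : Finset (Fin d)) :
    ∑ i ∈ I, x i = ∑ i, (if i ∈ I then (1:ZMod 2) else 0) • x i := by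
  simp only [ite_smul, one_smul, zero_smul, Finset.sum_ite_mem, Finset.univ_inter]

lemma decomp_bij {n d : ℕ} (x : Fin d → (Fin n → ZMod 2))
    (W : Submodule (ZMod 2) (Fin n → ZMod 2))
    (hx : LinearIndependent (ZMod 2) fun i => Submodule.Quotient.mk (p := W) (x i))
    (V : Submodule (ZMod 2) (Fin n → ZMod 2))
    (hV : V = W ⊔ Submodule.span (ZMod 2) (Set.range x)) :
    ∃ f : Finset (Fin d) × W → V, Function.Bijective f ∧
      ∀ p, (f p : Fin n → ZMod 2) = (∑ i ∈ p.1, x i) + (p.2 : Fin n → ZMod 2) := by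
  have hmem : ∀ p : Finset (Fin d) × W, (∑ i ∈ p.1, x i) + (p.2 : Fin n → ZMod 2) ∈ V := by
    intro p
    rw [hV]
    refine Submodule.add_mem _ (Submodule.mem_sup_right ?_) (Submodule.mem_sup_left p.2.2)
    exact Submodule.sum_mem _ fun i _ => Submodule.subset_span ⟨i, rfl⟩
  refine ⟨fun p => ⟨_, hmem p⟩, ⟨?_, ?_⟩, fun p => rfl⟩
  · rintro ⟨I, w⟩ ⟨J, w'⟩ h
    have h' : (∑ i ∈ I, x i) + (w : Fin n → ZMod 2) = (∑ i ∈ J, x i) + w' :=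
      congrArg Subtype.val h
    have hq : ∑ i, ((if i ∈ I then (1:ZMod 2) else 0) - (if i ∈ J then (1:ZMod 2) else 0)) •
        (Submodule.Quotient.mk (p := W) (x i)) = 0 := by
      have : Submodule.Quotient.mk (p := W) (∑ i ∈ I, x i - ∑ i ∈ J, x i) = 0 := by
        rw [Submodule.Quotient.mk_eq_zero]
        have : (∑ i ∈ I, x i) - ∑ i ∈ J, x i = (w' : Fin n → ZMod 2) - w := by
          have := h'; abel_nf; abel_nf at this
          linear_combination (norm := abel) this
        rw [this]; exact Submodule.sub_mem _ w'.2 w.2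
      rw [S_eq x I, S_eq x J] at this
      rw [← Submodule.mkQ_apply, map_sub, map_sum, map_sum] at this
      simp only [map_smul, Submodule.mkQ_apply] at this
      simp only [sub_smul, Finset.sum_sub_distrib]
      exact this
    have := Fintype.linearIndependent_iff.mp hx _ hq
    have hIJ : I = J := by
      ext i
      have hi := this i
      by_cases h1 : i ∈ I <;> by_cases h2 : i ∈ J <;> simp [h1, h2] at hi ⊢
    subst hIJ
    have : (w : Fin n → ZMod 2) = w' := add_left_cancel h'
    exact Prod.ext rfl (Subtype.ext this)
  · rintro ⟨v, hv⟩
    rw [hV, Submodule.mem_sup] at hv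
    obtain ⟨w, hw, s, hs, hws⟩ := hv
    rw [Submodule.mem_span_range_iff_exists_fun] at hs
    obtain ⟨c, hc⟩ := hs
    refine ⟨⟨Finset.univ.filter (fun i => c i = 1), ⟨w, hw⟩⟩, ?_⟩
    apply Subtype.ext
    show (∑ i ∈ Finset.univ.filter (fun i => c i = 1), x i) + w = v
    have : ∑ i ∈ Finset.univ.filter (fun i => c i = 1), x i = s := by
      rw [← hc, Finset.sum_filter]
      apply Finset.sum_congr rfl
      intro i _
      rcases zmod2_cases (c i) with h | h <;> simp [h]
    rw [this, add_comm, hws]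

lemma fcoset2_decomp {n d : ℕ} (A : Set (Fin n → ZMod 2)) (x : Fin d → (Fin n → ZMod 2))
    (W : Submodule (ZMod 2) (Fin n → ZMod 2))
    (hx : LinearIndependent (ZMod 2) fun i => Submodule.Quotient.mk (p := W) (x i))
    (V : Submodule (ZMod 2) (Fin n → ZMod 2))
    (hV : V = W ⊔ Submodule.span (ZMod 2) (Set.range x)) (r : Fin n → ZMod 2) :
    fcoset2 A 0 V r = (∑ I : Finset (Fin d), fcoset2 A (∑ i ∈ I, x i) W r) / (2:ℂ)^d := by
  classical
  obtain ⟨f, hf, hfc⟩ := decomp_bij x W hx V hV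
  have hcV : (Fintype.card V : ℂ) = (2:ℂ)^d * (Fintype.card W : ℂ) := by
    rw [← Fintype.card_of_bijective hf, Fintype.card_prod, Fintype.card_finset, Fintype.card_fin]
    push_cast; ring
  set F : (Fin n → ZMod 2) → ℂ := fun y => if y ∈ A then chi2 (dot2 r y) else 0 with hF
  have key : (∑ v : V, F v) = ∑ I : Finset (Fin d), ∑ w : W, F ((∑ i ∈ I, x i) + w) := by
    have h2 : ∑ p : Finset (Fin d) × W, F ((∑ i ∈ p.1, x i) + (p.2 : Fin n → ZMod 2))
        = ∑ v : V, F v := Fintype.sum_bijective f hf _ _ (fun p => by rw [hfc])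
    rw [← h2, Fintype.sum_prod_type]
  have lhs : fcoset2 A 0 V r = (∑ v : V, F v) / (Fintype.card V : ℂ) := by
    simp only [fcoset2, hF, zero_add]
  rw [lhs, key, hcV]
  unfold fcoset2
  conv_rhs => rw [← Finset.sum_div, div_div]
  rw [mul_comm ((2:ℂ)^d)]

lemma fcoset2_perp {n : ℕ} (A : Set (Fin n → ZMod 2)) (y : Fin n → ZMod 2)
    (W : Submodule (ZMod 2) (Fin n → ZMod 2)) (r : Fin n → ZMod 2)
    (h0 : ∀ w ∈ W, dot2 r w = 0) :
    fcoset2 A y W r = chi2 (dot2 r y) * ((dens2 A y W : ℝ) : ℂ) := by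
  rw [fcoset2, dens2]
  have hdot : ∀ w : W, dot2 r (y + (w : Fin n → ZMod 2)) = dot2 r y := by
    intro w
    have : dot2 r (y + (w : Fin n → ZMod 2)) = dot2 r y + dot2 r w :=
      map_add (dotL r) y w
    rw [this, h0 w w.2, add_zero]
  push_cast [apply_ite (Complex.ofReal)]
  rw [← mul_div_assoc, Finset.mul_sum]
  congr 1
  apply Finset.sum_congr rfl
  intro w _
  rw [hdot w]
  split <;> simp

/-- combining the two frequency regimes. If `A` is `ε`-uniform on
every coset `(∑_{i∈I} xᵢ) + W` (`I ≠ ∅`) and the densities of `A` on these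
cosets lie in a common window `[j/r₀, (j+1)/r₀)`, then `V = W + ⟨x₁,…,x_d⟩`
satisfies `sup_{r ∉ V^⊥} |(1_A μ_V)^∧(r)| ≤ 2^{-d} + ε + 1/r₀`; in particular
if `2^d, r₀ ≥ 1/ε` then the sup is at most `3ε`. -/
theorem combined_uniformity_bound {n d r₀ : ℕ} (hd : 1 ≤ d) (hr₀ : 1 ≤ r₀)
    (A : Set (Fin n → ZMod 2)) (W : Submodule (ZMod 2) (Fin n → ZMod 2))
    (ε : ℝ) (hε0 : 0 < ε) (hε1 : ε ≤ 1)
    (x : Fin d → (Fin n → ZMod 2))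
    (hx : LinearIndependent (ZMod 2) fun i => Submodule.Quotient.mk (p := W) (x i))
    (hunif : ∀ I : Finset (Fin d), I.Nonempty →
      ∀ r : Fin n → ZMod 2, (∃ w ∈ W, dot2 r w ≠ 0) →
        ‖fcoset2 A (∑ i ∈ I, x i) W r‖ ≤ ε)
    (j : ℕ)
    (hdens : ∀ I : Finset (Fin d), I.Nonempty →
      (j : ℝ) / r₀ ≤ dens2 A (∑ i ∈ I, x i) W ∧
      dens2 A (∑ i ∈ I, x i) W < ((j : ℝ) + 1) / r₀)
    (V : Submodule (ZMod 2) (Fin n → ZMod 2))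
    (hV : V = W ⊔ Submodule.span (ZMod 2) (Set.range x)) :
    (∀ r : Fin n → ZMod 2, (∃ v ∈ V, dot2 r v ≠ 0) →
      ‖fcoset2 A 0 V r‖ ≤ ((2 : ℝ) ^ d)⁻¹ + ε + 1 / r₀) ∧
    (1 / ε ≤ (2 : ℝ) ^ d → 1 / ε ≤ (r₀ : ℝ) →
      ∀ r : Fin n → ZMod 2, (∃ v ∈ V, dot2 r v ≠ 0) →
        ‖fcoset2 A 0 V r‖ ≤ 3 * ε) := by
  have hr₀R : (0:ℝ) < r₀ := by exact_mod_cast hr₀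
  have hcd : (0:ℝ) < (2:ℝ)^d := by positivity
  have part1 : ∀ r : Fin n → ZMod 2, (∃ v ∈ V, dot2 r v ≠ 0) →
      ‖fcoset2 A 0 V r‖ ≤ ((2:ℝ)^d)⁻¹ + ε + 1/r₀ := by
    intro r hr
    have hdec := fcoset2_decomp A x W hx V hV r
    have habs : ‖fcoset2 A 0 V r‖
        = ‖∑ I : Finset (Fin d), fcoset2 A (∑ i ∈ I, x i) W r‖ / (2:ℝ)^d := by
      rw [hdec, norm_div, norm_pow]
      norm_num
    rw [habs]
    by_cases hW : ∃ w ∈ W, dot2 r w ≠ 0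
    · -- r not orthogonal to W
      have hsum : ‖∑ I : Finset (Fin d), fcoset2 A (∑ i ∈ I, x i) W r‖
          ≤ (2:ℝ)^d * ε + 1 := by
        calc ‖∑ I : Finset (Fin d), fcoset2 A (∑ i ∈ I, x i) W r‖
            ≤ ∑ I : Finset (Fin d), ‖fcoset2 A (∑ i ∈ I, x i) W r‖ :=
              norm_sum_le _ _
          _ ≤ ∑ I : Finset (Fin d), (ε + if I = ∅ then 1 else 0) := by
              apply Finset.sum_le_sum
              intro I _
              by_cases hI : I = ∅
              · rw [if_pos hI]
                have := abs_fcoset2_le_one A (∑ i ∈ I, x i) W r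
                linarith
              · rw [if_neg hI, add_zero]
                exact hunif I (Finset.nonempty_iff_ne_empty.mpr hI) r hW
          _ = (2:ℝ)^d * ε + 1 := by
              rw [Finset.sum_add_distrib, Finset.sum_const,
                Finset.sum_ite_eq' Finset.univ (∅ : Finset (Fin d)) (fun _ => (1:ℝ))]
              simp [Fintype.card_finset, mul_comm]
      rw [div_le_iff₀ hcd]
      have hexp : (((2:ℝ)^d)⁻¹ + ε + 1/r₀) * (2:ℝ)^d
          = 1 + ε * (2:ℝ)^d + (2:ℝ)^d/r₀ := by
        field_simp
      rw [hexp]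
      have hpos : (0:ℝ) ≤ (2:ℝ)^d / r₀ := by positivity
      nlinarith [hsum]
    · -- r orthogonal to W
      push_neg at hW
      have hxi : ∃ i, dot2 r (x i) ≠ 0 := by
        by_contra h
        push_neg at h
        obtain ⟨v, hv, hvne⟩ := hr
        apply hvne
        have hVk : V ≤ LinearMap.ker (dotL r) := by
          rw [hV]
          apply sup_le
          · intro w hw
            exact LinearMap.mem_ker.mpr (hW w hw)
          · rw [Submodule.span_le]
            rintro _ ⟨i, rfl⟩
            exact LinearMap.mem_ker.mpr (h i)
        exact hVk hv
      obtain ⟨i₀, hi₀⟩ := hxi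
      set c : ℝ := (j:ℝ)/r₀ with hc
      set D : Finset (Fin d) → ℝ := fun I => dens2 A (∑ i ∈ I, x i) W with hD
      set s : Finset (Fin d) → ℝ := fun I => (-1:ℝ)^((dot2 r (∑ i ∈ I, x i)).val) with hs
      have hfcI : ∀ I : Finset (Fin d),
          fcoset2 A (∑ i ∈ I, x i) W r = ((s I * D I : ℝ) : ℂ) := by
        intro I
        rw [fcoset2_perp A _ W r hW, chi2, hs, hD]
        push_cast
        ring
      have habs2 : ‖∑ I : Finset (Fin d), fcoset2 A (∑ i ∈ I, x i) W r‖
          = |∑ I : Finset (Fin d), s I * D I| := by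
        simp_rw [hfcI]
        rw [← Complex.ofReal_sum, Complex.norm_real, Real.norm_eq_abs]
      rw [habs2]
      have hsI : ∀ I : Finset (Fin d), s I = ∏ i ∈ I, (-1:ℝ)^((dot2 r (x i)).val) := by
        intro I
        rw [hs]
        simp only
        rw [show dot2 r (∑ i ∈ I, x i) = ∑ i ∈ I, dot2 r (x i) from map_sum (dotL r) _ _]
        exact chiR_sum _ _
      have hzero : ∑ I : Finset (Fin d), s I = 0 := by
        have h2 : ∏ i, ((-1:ℝ)^((dot2 r (x i)).val) + 1) = 0 :=
          Finset.prod_eq_zero (Finset.mem_univ i₀) (by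
            rw [zmod2_val_of_ne _ hi₀]; norm_num)
        calc ∑ I : Finset (Fin d), s I
            = ∑ I : Finset (Fin d), ∏ i ∈ I, (-1:ℝ)^((dot2 r (x i)).val) := by
              exact Finset.sum_congr rfl fun I _ => hsI I
          _ = ∏ i, ((-1:ℝ)^((dot2 r (x i)).val) + 1) := by
              rw [Finset.prod_add, ← Finset.powerset_univ]
              simp
          _ = 0 := h2
      have hkey : ∑ I : Finset (Fin d), s I * D I
          = ∑ I : Finset (Fin d), s I * (D I - c) := by
        simp only [mul_sub]
        rw [Finset.sum_sub_distrib, ← Finset.sum_mul, hzero]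
        simp
      rw [hkey]
      have hc0 : 0 ≤ c := by rw [hc]; positivity
      have hc1 : c ≤ 1 := by
        have hne : ({i₀} : Finset (Fin d)).Nonempty := ⟨i₀, Finset.mem_singleton_self i₀⟩
        have h1 : c ≤ D {i₀} := (hdens {i₀} hne).1
        have h2 : D {i₀} ≤ 1 := dens2_le_one A _ W
        linarith
      have hbound : |∑ I : Finset (Fin d), s I * (D I - c)| ≤ (2:ℝ)^d * (1/(r₀:ℝ)) + 1 := by
        calc |∑ I : Finset (Fin d), s I * (D I - c)|
            ≤ ∑ I : Finset (Fin d), |s I * (D I - c)| := Finset.abs_sum_le_sum_abs _ _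
          _ ≤ ∑ I : Finset (Fin d), (1/(r₀:ℝ) + if I = ∅ then 1 else 0) := by
              apply Finset.sum_le_sum
              intro I _
              have hsabs : |s I| = 1 := by rw [hs]; simp [abs_pow]
              rw [abs_mul, hsabs, one_mul]
              have hr0inv : (0:ℝ) ≤ 1/r₀ := by positivity
              by_cases hI : I = ∅
              · rw [if_pos hI]
                have h01 : 0 ≤ D I := dens2_nonneg A _ W
                have h11 : D I ≤ 1 := dens2_le_one A _ W
                rw [abs_le]
                constructor <;> linarith
              · rw [if_neg hI, add_zero]
                obtain ⟨hl, hu⟩ := hdens I (Finset.nonempty_iff_ne_empty.mpr hI)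
                have hl' : c ≤ D I := hl
                have hu' : D I < c + 1/r₀ := by
                  have : ((j:ℝ)+1)/r₀ = c + 1/r₀ := by rw [hc, add_div]
                  rw [← this]
                  exact hu
                rw [abs_le]
                constructor <;> linarith
          _ = (2:ℝ)^d * (1/(r₀:ℝ)) + 1 := by
              rw [Finset.sum_add_distrib, Finset.sum_const,
                Finset.sum_ite_eq' Finset.univ (∅ : Finset (Fin d)) (fun _ => (1:ℝ))]
              simp [Fintype.card_finset, mul_comm]
      rw [div_le_iff₀ hcd]
      have hexp : (((2:ℝ)^d)⁻¹ + ε + 1/r₀) * (2:ℝ)^d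
          = 1 + ε * (2:ℝ)^d + (2:ℝ)^d * (1/(r₀:ℝ)) := by
        field_simp
      rw [hexp]
      nlinarith [hbound]
  refine ⟨part1, ?_⟩
  intro h1 h2 r hr
  have hp := part1 r hr
  have h3 : ((2:ℝ)^d)⁻¹ ≤ ε := by
    have := inv_anti₀ (by positivity : (0:ℝ) < 1/ε) h1
    rwa [one_div, inv_inv] at this
  have h4 : 1/(r₀:ℝ) ≤ ε := by
    have := inv_anti₀ (by positivity : (0:ℝ) < 1/ε) h2
    rwa [one_div, inv_inv, ← one_div] at this
  linarith
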